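/- Let 𝒳, 𝒴 be nonempty finite sets, let W be a channel from 𝒳 to 𝒴, and let 1 < α ≤ β < ∞. Then sup over probability mass functions Q on 𝒳 of I_α^S(Q,W) is at most sup over probability mass functions Q on 𝒳 of I_β^S(Q,W); that is, the maximal α-leakage is monotonically non-decreasing in α. -/

import Mathlib

open Real BigOperators

/-- A probability mass function on a finite set: nonnegative and sums to 1. -/
def IsPMF {X : Type} [Fintype X] (P : X → ℝ) : Prop :=
  (∀ x, 0 ≤ P x) ∧ ∑ x, P x = 1

/-- Sibson mutual information of order α of input pmf `Q` and channel `W`. -/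
noncomputable def sibsonMI (α : ℝ) {X Y : Type} [Fintype X] [Fintype Y]
    (Q : X → ℝ) (W : X → Y → ℝ) : ℝ :=
  (α / (α - 1)) * Real.log (∑ y, (∑ x, Q x * W x y ^ α) ^ (1 / α))

/-- Maximal α-leakage of a channel `W`. -/
noncomputable def maxAlphaLeakage (α : ℝ) {X Y : Type} [Fintype X] [Fintype Y]
    (W : X → Y → ℝ) : ℝ :=
  sSup {v : ℝ | ∃ Q : X → ℝ, IsPMF Q ∧ v = sibsonMI α Q W}

lemma S_pos {X Y : Type} [Fintype X] [Fintype Y] (Q : X → ℝ) (W : X → Y → ℝ)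
    (hQ : IsPMF Q) (hW : ∀ x, IsPMF (W x)) {γ : ℝ} (hγ : 0 < γ) :
    0 < ∑ y, (∑ x, Q x * W x y ^ γ) ^ (1 / γ) := by
  obtain ⟨x0, hx0⟩ : ∃ x, 0 < Q x := by
    by_contra h
    push_neg at h
    have h1 : ∑ x, Q x ≤ 0 := Finset.sum_nonpos (fun x _ => h x)
    rw [hQ.2] at h1; linarith
  obtain ⟨y0, hy0⟩ : ∃ y, 0 < W x0 y := by
    by_contra h
    push_neg at h
    have h1 : ∑ y, W x0 y ≤ 0 := Finset.sum_nonpos (fun y _ => h y)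
    rw [(hW x0).2] at h1; linarith
  have hA : 0 < ∑ x, Q x * W x y0 ^ γ := by
    refine Finset.sum_pos' (fun x _ => mul_nonneg (hQ.1 x) (Real.rpow_nonneg ((hW x).1 y0) γ))
      ⟨x0, Finset.mem_univ _, mul_pos hx0 (Real.rpow_pos_of_pos hy0 γ)⟩
  refine Finset.sum_pos' (fun y _ => Real.rpow_nonneg
    (Finset.sum_nonneg fun x _ => mul_nonneg (hQ.1 x) (Real.rpow_nonneg ((hW x).1 y) γ)) _)
    ⟨y0, Finset.mem_univ _, Real.rpow_pos_of_pos hA _⟩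
lemma sibsonMI_mono {X Y : Type} [Fintype X] [Fintype Y] (Q : X → ℝ) (W : X → Y → ℝ)
    (hQ : IsPMF Q) (hW : ∀ x, IsPMF (W x)) {α β : ℝ} (hα : 1 < α) (hαβ : α ≤ β) :
    sibsonMI α Q W ≤ sibsonMI β Q W := by
  have hβ : 1 < β := hα.trans_le hαβ
  have hα0 : (0:ℝ) < α := by linarith
  have hβ0 : (0:ℝ) < β := by linarith
  have hα1 : (0:ℝ) < α - 1 := by linarith
  have hβ1 : (0:ℝ) < β - 1 := by linarith
  have hWn : ∀ x y, 0 ≤ W x y := fun x y => (hW x).1 y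
  set Aα : Y → ℝ := fun y => ∑ x, Q x * W x y ^ α with hAαdef
  set Aβ : Y → ℝ := fun y => ∑ x, Q x * W x y ^ β with hAβdef
  have hAαn : ∀ y, 0 ≤ Aα y := fun y =>
    Finset.sum_nonneg fun x _ => mul_nonneg (hQ.1 x) (Real.rpow_nonneg (hWn x y) α)
  have hAβn : ∀ y, 0 ≤ Aβ y := fun y =>
    Finset.sum_nonneg fun x _ => mul_nonneg (hQ.1 x) (Real.rpow_nonneg (hWn x y) β)
  set Sα : ℝ := ∑ y, Aα y ^ (1/α) with hSαdef
  set Sβ : ℝ := ∑ y, Aβ y ^ (1/β) with hSβdef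
  have hSα : 0 < Sα := S_pos Q W hQ hW hα0
  have hSβ : 0 < Sβ := S_pos Q W hQ hW hβ0
  set r : Y → ℝ := fun y => Aβ y ^ (1/β) / Sβ with hrdef
  have hrn : ∀ y, 0 ≤ r y := fun y => div_nonneg (Real.rpow_nonneg (hAβn y) _) hSβ.le
  have hrsum : ∑ y, r y = 1 := by
    rw [hrdef, ← Finset.sum_div, ← hSβdef, div_self hSβ.ne']
  have hr0 : ∀ y, r y = 0 → Aβ y = 0 := by
    intro y hy
    by_contra hne
    have hpos : 0 < Aβ y := lt_of_le_of_ne (hAβn y) (Ne.symm hne)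
    have : 0 < r y := div_pos (Real.rpow_pos_of_pos hpos _) hSβ
    linarith
  have hr0' : ∀ y, r y = 0 → ∀ x, Q x = 0 ∨ W x y = 0 := by
    intro y hy x
    have hA := hr0 y hy
    have hterm : Q x * W x y ^ β = 0 := by
      have := (Finset.sum_eq_zero_iff_of_nonneg
        (fun x _ => mul_nonneg (hQ.1 x) (Real.rpow_nonneg (hWn x y) β))).1 hA x (Finset.mem_univ x)
      exact this
    rcases mul_eq_zero.1 hterm with h | h
    · exact Or.inl h
    · right
      by_contra hne
      have : 0 < W x y ^ β := Real.rpow_pos_of_pos (lt_of_le_of_ne (hWn x y) (Ne.symm hne)) _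
      linarith
  have hr0α : ∀ y, r y = 0 → Aα y = 0 := by
    intro y hy
    rw [hAαdef]
    refine Finset.sum_eq_zero fun x _ => ?_
    rcases hr0' y hy x with h | h
    · rw [h, zero_mul]
    · rw [h, Real.zero_rpow hα0.ne', mul_zero]
  set Tα : ℝ := ∑ y, r y ^ (1-α) * Aα y with hTαdef
  set Tβ : ℝ := ∑ y, r y ^ (1-β) * Aβ y with hTβdef
  have hTαn : 0 ≤ Tα :=
    Finset.sum_nonneg fun y _ => mul_nonneg (Real.rpow_nonneg (hrn y) _) (hAαn y)
  -- (2) Tβ = Sβ ^ β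
  have hTβS : Tβ = Sβ ^ β := by
    have hterm : ∀ y, r y ^ (1-β) * Aβ y = Sβ ^ (β-1) * Aβ y ^ (1/β) := by
      intro y
      rcases eq_or_lt_of_le (hAβn y) with h | h
      · rw [← h, Real.zero_rpow (by positivity : (1:ℝ)/β ≠ 0), mul_zero, mul_zero]
      · have hry : 0 < r y := div_pos (Real.rpow_pos_of_pos h _) hSβ
        simp only [hrdef]
        rw [Real.div_rpow (Real.rpow_nonneg (hAβn y) _) hSβ.le,
          ← Real.rpow_mul (hAβn y)]
        rw [div_eq_mul_inv, ← Real.rpow_neg hSβ.le, neg_sub]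
        have h1 : Aβ y ^ (1/β * (1-β)) * Sβ ^ (β-1) * Aβ y
            = Sβ ^ (β-1) * (Aβ y ^ (1/β * (1-β)) * Aβ y ^ (1:ℝ)) := by
          rw [Real.rpow_one]; ring
        rw [h1, ← Real.rpow_add h]
        congr 2
        field_simp
        ring
    rw [hTβdef]
    simp_rw [hterm]
    rw [← Finset.mul_sum, ← hSβdef]
    nth_rewrite 2 [← Real.rpow_one Sβ]
    rw [← Real.rpow_add hSβ]
    congr 1
    ring
  -- (3) Hölder: Sα ≤ Tα ^ (1/α)
  have hq : Real.HolderConjugate α (α / (α - 1)) := Real.HolderConjugate.conjExponent hα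
  set f : Y → ℝ := fun y => (r y ^ (1-α) * Aα y) ^ (1/α) with hfdef
  set g : Y → ℝ := fun y => r y ^ ((α-1)/α) with hgdef
  have hfn : ∀ y, 0 ≤ f y := fun y =>
    Real.rpow_nonneg (mul_nonneg (Real.rpow_nonneg (hrn y) _) (hAαn y)) _
  have hgn : ∀ y, 0 ≤ g y := fun y => Real.rpow_nonneg (hrn y) _
  have hfg : ∀ y, Aα y ^ (1/α) = f y * g y := by
    intro y
    rcases eq_or_lt_of_le (hrn y) with h | h
    · have hA0 : Aα y = 0 := hr0α y h.symm
      simp only [hfdef, hgdef, ← h, hA0]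
      rw [Real.zero_rpow (by positivity : (1:ℝ)/α ≠ 0), mul_zero,
        Real.zero_rpow (by positivity : (1:ℝ)/α ≠ 0), zero_mul]
    · simp only [hfdef, hgdef]
      rw [Real.mul_rpow (Real.rpow_nonneg (hrn y) _) (hAαn y),
        ← Real.rpow_mul (hrn y)]
      have h2 : r y ^ ((1-α) * (1/α)) * Aα y ^ (1/α) * r y ^ ((α-1)/α)
          = Aα y ^ (1/α) * (r y ^ ((1-α) * (1/α)) * r y ^ ((α-1)/α)) := by ring
      rw [h2, ← Real.rpow_add h]
      have h3 : (1-α) * (1/α) + (α-1)/α = 0 := by field_simp; ring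
      rw [h3, Real.rpow_zero, mul_one]
  have hfα : ∀ y, f y ^ α = r y ^ (1-α) * Aα y := by
    intro y
    rw [hfdef]
    simp only
    rw [← Real.rpow_mul (mul_nonneg (Real.rpow_nonneg (hrn y) _) (hAαn y)),
      one_div_mul_cancel hα0.ne', Real.rpow_one]
  have hgq : ∀ y, g y ^ (α/(α-1)) = r y := by
    intro y
    rw [hgdef]
    simp only
    rw [← Real.rpow_mul (hrn y)]
    have : (α-1)/α * (α/(α-1)) = 1 := by field_simp
    rw [this, Real.rpow_one]
  have holder : Sα ≤ Tα ^ (1/α) := by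
    have h := Real.inner_le_Lp_mul_Lq_of_nonneg Finset.univ hq
      (fun y _ => hfn y) (fun y _ => hgn y)
    simp_rw [hfα, hgq] at h
    rw [hrsum, ← hTαdef, Real.one_rpow, mul_one] at h
    calc Sα = ∑ y, f y * g y := by rw [hSαdef]; exact Finset.sum_congr rfl fun y _ => hfg y
    _ ≤ Tα ^ (1/α) := h
  have hSαT : Sα ^ α ≤ Tα := by
    calc Sα ^ α ≤ (Tα ^ (1/α)) ^ α :=
          Real.rpow_le_rpow hSα.le holder hα0.le
    _ = Tα := by rw [← Real.rpow_mul hTαn, one_div_mul_cancel hα0.ne', Real.rpow_one]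
  have hTα : 0 < Tα := lt_of_lt_of_le (Real.rpow_pos_of_pos hSα α) hSαT
  -- (4) power mean: Tα ^ ((β-1)/(α-1)) ≤ Tβ
  set p : ℝ := (β-1)/(α-1) with hpdef
  have hp1 : 1 ≤ p := by rw [hpdef, le_div_iff₀ hα1]; linarith
  set Z : X × Y → ℝ := fun q => W q.1 q.2 / r q.2 with hZdef
  have hZn : ∀ q, 0 ≤ Z q := fun q => div_nonneg (hWn q.1 q.2) (hrn q.2)
  set w : X × Y → ℝ := fun q => Q q.1 * W q.1 q.2 with hwdef
  have hwn : ∀ q, 0 ≤ w q := fun q => mul_nonneg (hQ.1 q.1) (hWn q.1 q.2)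
  have hwsum : ∑ q : X × Y, w q = 1 := by
    rw [Fintype.sum_prod_type]
    have h1 : ∀ x, ∑ y, w (x, y) = Q x := by
      intro x
      simp only [hwdef]
      rw [← Finset.mul_sum, (hW x).2, mul_one]
    simp_rw [h1]
    exact hQ.2
  have hrep : ∀ γ : ℝ, 1 < γ →
      (∑ y, r y ^ (1-γ) * (∑ x, Q x * W x y ^ γ)) = ∑ q : X × Y, w q * Z q ^ (γ-1) := by
    intro γ hγ
    rw [Fintype.sum_prod_type, Finset.sum_comm]
    refine Finset.sum_congr rfl fun y _ => ?_
    rw [Finset.mul_sum]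
    refine Finset.sum_congr rfl fun x _ => ?_
    simp only [hwdef, hZdef]
    rcases eq_or_lt_of_le (hrn y) with h | h
    · rw [← h, Real.zero_rpow (by intro hc; linarith [hc] : (1:ℝ)-γ ≠ 0), zero_mul,
        div_zero, Real.zero_rpow (by intro hc; linarith [hc] : γ-1 ≠ 0), mul_zero]
    · rcases eq_or_lt_of_le (hWn x y) with h2 | h2
      · rw [← h2]
        simp [Real.zero_rpow (by positivity : γ ≠ 0)]
      · rw [Real.div_rpow (hWn x y) (hrn y)]
        have hWγ : W x y ^ γ = W x y * W x y ^ (γ-1) := by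
          nth_rewrite 2 [← Real.rpow_one (W x y)]
          rw [← Real.rpow_add h2]
          congr 1
          ring
        have hrγ : r y ^ (1-γ) = (r y ^ (γ-1))⁻¹ := by
          rw [← Real.rpow_neg (hrn y), neg_sub]
        rw [hWγ, hrγ, div_eq_mul_inv]
        ring
  have hTT : Tα ^ p ≤ Tβ := by
    have key := Real.rpow_arith_mean_le_arith_mean_rpow Finset.univ w
      (fun q => Z q ^ (α-1)) (fun q _ => hwn q) hwsum
      (fun q _ => Real.rpow_nonneg (hZn q) _) hp1
    have hz : ∀ q : X × Y, (Z q ^ (α-1)) ^ p = Z q ^ (β-1) := by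
      intro q
      rw [← Real.rpow_mul (hZn q), hpdef]
      congr 1
      field_simp
    simp_rw [hz] at key
    rw [← hrep α hα, ← hrep β hβ] at key
    exact key
  -- (5) assemble
  have h1 : α * Real.log Sα ≤ Real.log Tα := by
    rw [← Real.log_rpow hSα]
    exact Real.log_le_log (Real.rpow_pos_of_pos hSα α) hSαT
  have h2 : p * Real.log Tα ≤ β * Real.log Sβ := by
    rw [← Real.log_rpow hTα, ← Real.log_rpow hSβ, ← hTβS]
    exact Real.log_le_log (Real.rpow_pos_of_pos hTα p) hTT
  show (α / (α - 1)) * Real.log Sα ≤ (β / (β - 1)) * Real.log Sβ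
  rw [div_mul_eq_mul_div, div_mul_eq_mul_div, div_le_div_iff₀ hα1 hβ1]
  have h2' : (β - 1) * Real.log Tα ≤ β * Real.log Sβ * (α - 1) := by
    have h3 := mul_le_mul_of_nonneg_right h2 hα1.le
    have h4 : (β - 1) * Real.log Tα = p * Real.log Tα * (α - 1) := by
      rw [hpdef]; field_simp
    rw [h4]; exact h3
  linarith [mul_le_mul_of_nonneg_right h1 hβ1.le, h2']

/-- the maximal α-leakage is non-decreasing in α. -/
theorem maxAlphaLeakage_mono {X Y : Type}
    [Fintype X] [Fintype Y] [Nonempty X] [Nonempty Y]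
    (W : X → Y → ℝ) (hW : ∀ x, IsPMF (W x))
    (α β : ℝ) (hα : 1 < α) (hαβ : α ≤ β) :
    maxAlphaLeakage α W ≤ maxAlphaLeakage β W := by
  have hβ : 1 < β := hα.trans_le hαβ
  have hβ0 : (0:ℝ) < β := by linarith
  -- the uniform pmf witnesses nonemptiness
  have hQu : IsPMF (fun _ : X => (Fintype.card X : ℝ)⁻¹) := by
    constructor
    · intro x; positivity
    · rw [Finset.sum_const, Finset.card_univ, nsmul_eq_mul, mul_inv_cancel₀]
      exact_mod_cast Fintype.card_ne_zero
  -- the β-set is bounded above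
  have hbdd : BddAbove {v : ℝ | ∃ Q : X → ℝ, IsPMF Q ∧ v = sibsonMI β Q W} := by
    refine ⟨(β / (β - 1)) * Real.log (∑ y, (∑ x, W x y ^ β) ^ (1 / β)), ?_⟩
    rintro v ⟨Q, hQ, rfl⟩
    have hQ1 : ∀ x, Q x ≤ 1 := by
      intro x
      rw [← hQ.2]
      exact Finset.single_le_sum (fun i _ => hQ.1 i) (Finset.mem_univ x)
    have hle : (∑ y, (∑ x, Q x * W x y ^ β) ^ (1 / β))
        ≤ ∑ y, (∑ x, W x y ^ β) ^ (1 / β) := by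
      refine Finset.sum_le_sum fun y _ => ?_
      refine Real.rpow_le_rpow (Finset.sum_nonneg fun x _ =>
        mul_nonneg (hQ.1 x) (Real.rpow_nonneg ((hW x).1 y) β)) ?_ (by positivity)
      refine Finset.sum_le_sum fun x _ => ?_
      exact mul_le_of_le_one_left (Real.rpow_nonneg ((hW x).1 y) β) (hQ1 x)
    have hpos := S_pos Q W hQ hW hβ0
    unfold sibsonMI
    refine mul_le_mul_of_nonneg_left ?_ (div_nonneg hβ0.le (by linarith))
    exact Real.log_le_log hpos hle
  refine csSup_le ⟨_, ⟨_, hQu, rfl⟩⟩ ?_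
  rintro v ⟨Q, hQ, rfl⟩
  calc sibsonMI α Q W ≤ sibsonMI β Q W := sibsonMI_mono Q W hQ hW hα hαβ
  _ ≤ maxAlphaLeakage β W := le_csSup hbdd ⟨Q, hQ, rfl⟩
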